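/- Let v, θ : ℝ → ℝ be twice continuously differentiable, g, b ∈ ℝ, g² + b² ≠ 0, L > 0, and p, q : ℝ → ℝ continuous, satisfying the voltage and phase subsystem ODEs: (bp - gq)/(g²+b²) + 2vv'θ' + v²θ'' = 0 and (gp + bq)/(g²+b²) + vv'' - v²(θ')² = 0 on [0, L], together with boundary conditions v(0) = 1, v'(L) = 0, v(L)²θ'(L) = 0. Then ∫₀ᴸ (g p(x) + b q(x))/(g²+b²) dx - v'(0) = ∫₀ᴸ ((v'(x))² + v(x)²(θ'(x))²) dx. -/

import Mathlib

theorem integrated_voltage_dissipation (v θ p q : ℝ → ℝ) (g b L : ℝ)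
    (hgb : g ^ 2 + b ^ 2 ≠ 0) (hL : 0 < L)
    (hv : ContDiff ℝ 2 v) (hθ : ContDiff ℝ 2 θ)
    (hp : Continuous p) (hq : Continuous q)
    (hV : ∀ x ∈ Set.Icc 0 L, (b * p x - g * q x) / (g ^ 2 + b ^ 2)
          + 2 * v x * deriv v x * deriv θ x + (v x) ^ 2 * deriv (deriv θ) x = 0)
    (hP : ∀ x ∈ Set.Icc 0 L, (g * p x + b * q x) / (g ^ 2 + b ^ 2)
          + v x * deriv (deriv v) x - (v x) ^ 2 * (deriv θ x) ^ 2 = 0)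
    (hb0 : v 0 = 1) (hbL : deriv v L = 0) (hbs : (v L) ^ 2 * deriv θ L = 0) :
    (∫ x in (0:ℝ)..L, (g * p x + b * q x) / (g ^ 2 + b ^ 2)) - deriv v 0
      = ∫ x in (0:ℝ)..L, ((deriv v x) ^ 2 + (v x) ^ 2 * (deriv θ x) ^ 2) := by
  have hv1 : ContDiff ℝ 1 (deriv v) := (contDiff_succ_iff_deriv.mp (show ContDiff ℝ (1+1) v by exact_mod_cast hv)).2.2
  have hvc : Continuous v := hv.continuous
  have hv'c : Continuous (deriv v) := hv1.continuous
  have hv''c : Continuous (deriv (deriv v)) := (contDiff_succ_iff_deriv.mp (show ContDiff ℝ (0+1) (deriv v) by exact_mod_cast hv1)).2.2.continuous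
  have hθ1 : ContDiff ℝ 1 (deriv θ) := (contDiff_succ_iff_deriv.mp (show ContDiff ℝ (1+1) θ by exact_mod_cast hθ)).2.2
  have hθ'c : Continuous (deriv θ) := hθ1.continuous
  have hder : ∀ x : ℝ, HasDerivAt (fun y => v y * deriv v y)
      ((deriv v x) ^ 2 + v x * deriv (deriv v) x) x := by
    intro x
    have h1 : HasDerivAt v (deriv v x) x :=
      ((hv.differentiable two_ne_zero) x).hasDerivAt
    have h2 : HasDerivAt (deriv v) (deriv (deriv v) x) x :=
      ((hv1.differentiable one_ne_zero) x).hasDerivAt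
    have := h1.fun_mul h2
    exact this.congr_deriv (by ring)
  have hint : ∫ x in (0:ℝ)..L, ((deriv v x) ^ 2 + v x * deriv (deriv v) x)
      = v L * deriv v L - v 0 * deriv v 0 :=
    intervalIntegral.integral_eq_sub_of_hasDerivAt (fun x _ => hder x)
      (by exact ((hv'c.pow 2).add (hvc.mul hv''c)).intervalIntegrable 0 L)
  have hcong : (∫ x in (0:ℝ)..L, (g * p x + b * q x) / (g ^ 2 + b ^ 2))
      = ∫ x in (0:ℝ)..L, ((v x) ^ 2 * (deriv θ x) ^ 2 - v x * deriv (deriv v) x) := by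
    apply intervalIntegral.integral_congr
    intro x hx
    rw [Set.uIcc_of_le hL.le] at hx
    have := hP x hx
    linarith
  rw [hcong]
  have hsplit : ∀ x : ℝ, (v x) ^ 2 * (deriv θ x) ^ 2 - v x * deriv (deriv v) x
      = ((deriv v x) ^ 2 + (v x) ^ 2 * (deriv θ x) ^ 2)
        - ((deriv v x) ^ 2 + v x * deriv (deriv v) x) := by intro x; ring
  have hI1 : IntervalIntegrable (fun x => (deriv v x) ^ 2 + (v x) ^ 2 * (deriv θ x) ^ 2)
      MeasureTheory.volume 0 L :=
    (by exact ((hv'c.pow 2).add ((hvc.pow 2).mul (hθ'c.pow 2))).intervalIntegrable 0 L)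
  have hI2 : IntervalIntegrable (fun x => (deriv v x) ^ 2 + v x * deriv (deriv v) x)
      MeasureTheory.volume 0 L :=
    (by exact ((hv'c.pow 2).add (hvc.mul hv''c)).intervalIntegrable 0 L)
  calc (∫ x in (0:ℝ)..L, ((v x) ^ 2 * (deriv θ x) ^ 2 - v x * deriv (deriv v) x)) - deriv v 0
      = (∫ x in (0:ℝ)..L, (((deriv v x) ^ 2 + (v x) ^ 2 * (deriv θ x) ^ 2)
          - ((deriv v x) ^ 2 + v x * deriv (deriv v) x))) - deriv v 0 := by
        simp only [hsplit]
    _ = (∫ x in (0:ℝ)..L, ((deriv v x) ^ 2 + (v x) ^ 2 * (deriv θ x) ^ 2))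
          - (∫ x in (0:ℝ)..L, ((deriv v x) ^ 2 + v x * deriv (deriv v) x)) - deriv v 0 := by
        rw [intervalIntegral.integral_sub hI1 hI2]
    _ = ∫ x in (0:ℝ)..L, ((deriv v x) ^ 2 + (v x) ^ 2 * (deriv θ x) ^ 2) := by
        rw [hint, hbL, hb0]; ring
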